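/- (Lemma 3.7, existence of an admissible stepsize.) Let n ≥ 1 and let F : ℝⁿ → ℝⁿ be differentiable with Fréchet derivative F′ Lipschitz continuous with constant L > 0 in the operator norm. Let ψ ∈ ℝⁿ with F′(ψ) invertible and F(ψ) ≠ 0. Then for every stepsize ω with 0 < ω ≤ min(1, 2‖F(ψ)‖ / (L‖F′(ψ)⁻¹F(ψ)‖²)), the damped Newton iterate ψ̄ = ψ − ω F′(ψ)⁻¹ F(ψ) satisfies ‖F(ψ̄)‖ ≤ ‖F(ψ)‖. -/

import Mathlib

set_option maxHeartbeats 800000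
set_option synthInstance.maxHeartbeats 400000


/-- Lemma 3.7, existence of an admissible stepsize: if `F′` is
`L`-Lipschitz, `F′(ψ)` is invertible, and `F(ψ) ≠ 0`, then every stepsize
`0 < ω ≤ min(1, 2‖F(ψ)‖/(L‖F′(ψ)⁻¹F(ψ)‖²))` yields
`‖F(ψ − ω F′(ψ)⁻¹F(ψ))‖ ≤ ‖F(ψ)‖`. -/
theorem admissible_stepsize_exists
    (n : ℕ) (hn : 1 ≤ n) (L : ℝ) (hL : 0 < L)
    (F : EuclideanSpace ℝ (Fin n) → EuclideanSpace ℝ (Fin n))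
    (hF : Differentiable ℝ F)
    (hLip : ∀ u v : EuclideanSpace ℝ (Fin n),
      ‖fderiv ℝ F u - fderiv ℝ F v‖ ≤ L * ‖u - v‖)
    (ψ : EuclideanSpace ℝ (Fin n))
    (Φ : EuclideanSpace ℝ (Fin n) ≃L[ℝ] EuclideanSpace ℝ (Fin n))
    (hΦ : (Φ : EuclideanSpace ℝ (Fin n) →L[ℝ] EuclideanSpace ℝ (Fin n)) = fderiv ℝ F ψ)
    (hFψ : F ψ ≠ 0) :
    ∀ ω : ℝ, 0 < ω →
      ω ≤ min 1 (2 * ‖F ψ‖ / (L * ‖Φ.symm (F ψ)‖ ^ 2)) →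
      ‖F (ψ - ω • Φ.symm (F ψ))‖ ≤ ‖F ψ‖ := by
  intro ω hω hωle
  obtain ⟨hω1, hω2⟩ := le_min_iff.mp hωle
  set d : EuclideanSpace ℝ (Fin n) := Φ.symm (F ψ) with hdd
  have hFd : (fderiv ℝ F ψ) d = F ψ := by
    rw [← hΦ]; exact Φ.apply_symm_apply (F ψ)
  have hd0 : d ≠ 0 := fun h => hFψ (by rw [← hFd, h, map_zero])
  set c : EuclideanSpace ℝ (Fin n) := ω • d with hcc
  -- Lipschitz continuity of the derivative map
  have hlip : LipschitzWith ⟨L, hL.le⟩ (fderiv ℝ F) := by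
    apply LipschitzWith.of_dist_le_mul
    intro u v
    rw [dist_eq_norm, dist_eq_norm]; exact hLip u v
  have hg : ∀ t : ℝ, HasDerivAt (fun t : ℝ => F (ψ - t • c))
      (-(fderiv ℝ F (ψ - t • c)) c) t := by
    intro t
    have h1 : HasDerivAt (fun t : ℝ => ψ - t • c) (-c) t := by
      simpa using ((hasDerivAt_id t).smul_const c).const_sub ψ
    have h2 := (hF (ψ - t • c)).hasFDerivAt
    simpa [Function.comp_def] using h2.comp_hasDerivAt t h1
  have hcont : Continuous fun t : ℝ => -(fderiv ℝ F (ψ - t • c)) c := by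
    have h3 : Continuous fun t : ℝ => fderiv ℝ F (ψ - t • c) :=
      hlip.continuous.comp (continuous_const.sub (continuous_id.smul continuous_const))
    exact ((ContinuousLinearMap.apply ℝ (EuclideanSpace ℝ (Fin n)) c).continuous.comp h3).neg
  have hint : (∫ t in (0:ℝ)..1, -(fderiv ℝ F (ψ - t • c)) c)
      = F (ψ - c) - F ψ := by
    have := intervalIntegral.integral_eq_sub_of_hasDerivAt
      (f := fun t : ℝ => F (ψ - t • c)) (fun t _ => hg t)
      (hcont.intervalIntegrable 0 1)
    simpa using this
  have hωF : (fderiv ℝ F ψ) c = ω • F ψ := by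
    rw [hcc, map_smul, hFd]
  have key : F (ψ - c) - (F ψ - ω • F ψ)
      = ∫ t in (0:ℝ)..1, ((fderiv ℝ F ψ) c - (fderiv ℝ F (ψ - t • c)) c) := by
    have hI1 : IntervalIntegrable (fun _ : ℝ => (fderiv ℝ F ψ) c)
        MeasureTheory.volume 0 1 := intervalIntegrable_const
    have hI2 : IntervalIntegrable (fun t : ℝ => (fderiv ℝ F (ψ - t • c)) c)
        MeasureTheory.volume 0 1 := (hcont.neg.intervalIntegrable 0 1).congr
      (fun t _ => neg_neg _)
    rw [intervalIntegral.integral_sub hI1 hI2]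
    have h4 : (∫ t in (0:ℝ)..1, (fderiv ℝ F (ψ - t • c)) c) = F ψ - F (ψ - c) := by
      have h5 : (∫ t in (0:ℝ)..1, (fderiv ℝ F (ψ - t • c)) c)
          = -∫ t in (0:ℝ)..1, -(fderiv ℝ F (ψ - t • c)) c := by
        rw [intervalIntegral.integral_neg, neg_neg]
      rw [h5, hint]; abel
    rw [h4, intervalIntegral.integral_const, hωF]
    simp
    abel
  have hnorm : ‖F (ψ - c) - (F ψ - ω • F ψ)‖ ≤ L * ‖c‖ ^ 2 / 2 := by
    rw [key]
    have hb : ∀ t ∈ Set.uIoc (0:ℝ) 1,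
        ‖(fderiv ℝ F ψ) c - (fderiv ℝ F (ψ - t • c)) c‖ ≤ L * ‖c‖ ^ 2 * t := by
      intro t ht
      rw [Set.uIoc_of_le (by norm_num : (0:ℝ) ≤ 1)] at ht
      have ht0 : 0 < t := ht.1
      have h6 : ‖(fderiv ℝ F ψ) c - (fderiv ℝ F (ψ - t • c)) c‖
          ≤ ‖fderiv ℝ F ψ - fderiv ℝ F (ψ - t • c)‖ * ‖c‖ := by
        simpa using (fderiv ℝ F ψ - fderiv ℝ F (ψ - t • c)).le_opNorm c
      have h7 : ‖fderiv ℝ F ψ - fderiv ℝ F (ψ - t • c)‖ ≤ L * (t * ‖c‖) := by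
        have := hLip ψ (ψ - t • c)
        have h8 : ψ - (ψ - t • c) = t • c := by abel
        rw [h8] at this
        simpa [norm_smul, abs_of_pos ht0] using this
      calc ‖(fderiv ℝ F ψ) c - (fderiv ℝ F (ψ - t • c)) c‖
          ≤ (L * (t * ‖c‖)) * ‖c‖ := h6.trans (by
            exact mul_le_mul_of_nonneg_right h7 (norm_nonneg c))
        _ = L * ‖c‖ ^ 2 * t := by ring
    have hInt : IntervalIntegrable (fun t : ℝ => L * ‖c‖ ^ 2 * t)
        MeasureTheory.volume 0 1 := (by continuity : Continuous fun t : ℝ => L * ‖c‖ ^ 2 * t).intervalIntegrable 0 1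
    have := intervalIntegral.norm_integral_le_abs_of_norm_le
      (f := fun t : ℝ => (fderiv ℝ F ψ) c - (fderiv ℝ F (ψ - t • c)) c)
      (g := fun t : ℝ => L * ‖c‖ ^ 2 * t)
      (MeasureTheory.ae_restrict_of_forall_mem measurableSet_uIoc hb) hInt
    calc ‖∫ t in (0:ℝ)..1, ((fderiv ℝ F ψ) c - (fderiv ℝ F (ψ - t • c)) c)‖
        ≤ |∫ t in (0:ℝ)..1, L * ‖c‖ ^ 2 * t| := this
      _ = L * ‖c‖ ^ 2 / 2 := by
          rw [intervalIntegral.integral_const_mul, integral_id,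
            abs_of_nonneg (by positivity)]; ring
  -- put everything together
  have hdn : ‖d‖ ≠ 0 := norm_ne_zero_iff.mpr hd0
  have hd2 : 0 < L * ‖d‖ ^ 2 := by positivity
  have hωd : ω * (L * ‖d‖ ^ 2) ≤ 2 * ‖F ψ‖ := by
    rw [← le_div_iff₀ hd2]; exact hω2
  have hcnorm : ‖c‖ = ω * ‖d‖ := by
    rw [hcc, norm_smul, Real.norm_eq_abs, abs_of_pos hω]
  have hfinal : ‖F (ψ - c)‖ ≤ ‖F (ψ - c) - (F ψ - ω • F ψ)‖ + ‖F ψ - ω • F ψ‖ := by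
    simpa using norm_add_le (F (ψ - c) - (F ψ - ω • F ψ)) (F ψ - ω • F ψ)
  have hrest : ‖F ψ - ω • F ψ‖ = (1 - ω) * ‖F ψ‖ := by
    have : F ψ - ω • F ψ = (1 - ω) • F ψ := by
      rw [sub_smul, one_smul]
    rw [this, norm_smul, Real.norm_eq_abs, abs_of_nonneg (by linarith)]
  have hquad : L * ‖c‖ ^ 2 / 2 ≤ ω * ‖F ψ‖ := by
    rw [hcnorm]
    nlinarith [norm_nonneg (F ψ), hω.le]
  calc ‖F (ψ - c)‖ ≤ L * ‖c‖ ^ 2 / 2 + (1 - ω) * ‖F ψ‖ := by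
        rw [← hrest]; linarith [hfinal, hnorm]
    _ ≤ ω * ‖F ψ‖ + (1 - ω) * ‖F ψ‖ := by linarith
    _ = ‖F ψ‖ := by ring
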